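/- For every integer m ≥ 2, real α > 0, and real numbers x₁, …, x_m, the iterated integral of |x₁ + y₂ + ⋯ + y_m|^α over y₂ ∈ [−x₂, x₂], …, y_m ∈ [−x_m, x_m] equals 1/((α+1)⋯(α+m−1)) times the sum over all sign choices s₂,…,s_m ∈ {−1,+1} of s₂⋯s_m · (x₁ + s₂x₂ + ⋯ + s_mx_m)^{m−1} |x₁ + s₂x₂ + ⋯ + s_mx_m|^α. -/

import Mathlib

open Real MeasureTheory

/-- Iterated interval integral of a function of the sum of the variables. -/
noncomputable def iterIntSum : List ℝ → (ℝ → ℝ) → ℝ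
  | [], f => f 0
  | a :: as, f => ∫ σ in (-a)..a, iterIntSum as (fun t => f (σ + t))

lemma key_deriv (α : ℝ) (hα : 0 < α) (n : ℕ) (x : ℝ) :
    HasDerivAt (fun y : ℝ => y ^ (n+1) * |y| ^ α) ((α + n + 1) * (x ^ n * |x| ^ α)) x := by
  rcases lt_trichotomy x 0 with hx | rfl | hx
  · have hne : (-x) ≠ 0 := by simp [hx.ne]
    have h1 : HasDerivAt (fun y : ℝ => (-y) ^ α) (α * (-x) ^ (α - 1) * (-1)) x :=
      (Real.hasDerivAt_rpow_const (Or.inl hne)).comp x (hasDerivAt_neg x)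
    have h2 : HasDerivAt (fun y : ℝ => y ^ (n+1) * (-y) ^ α)
        ((↑(n+1) * x ^ n) * (-x) ^ α + x ^ (n+1) * (α * (-x) ^ (α - 1) * (-1))) x :=
      (hasDerivAt_pow (n+1) x).mul h1
    have heq : (fun y : ℝ => y ^ (n+1) * |y| ^ α) =ᶠ[nhds x] fun y => y ^ (n+1) * (-y) ^ α := by
      filter_upwards [Iio_mem_nhds hx] with y hy
      rw [abs_of_neg hy]
    rw [abs_of_neg hx]
    refine (h2.congr_of_eventuallyEq heq).congr_deriv ?_
    have : (-x) ^ (α - 1) = (-x) ^ α / (-x) := by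
      rw [Real.rpow_sub (by linarith), Real.rpow_one]
    rw [this]
    have hx0 : x ≠ 0 := hx.ne
    field_simp
    push_cast; ring
  · have h0 : |(0:ℝ)| ^ α = 0 := by simp [Real.zero_rpow hα.ne']
    rw [h0]
    rw [hasDerivAt_iff_tendsto_slope]
    have : ∀ y ∈ ({(0:ℝ)}ᶜ : Set ℝ), y ^ n * |y| ^ α = slope (fun y : ℝ => y ^ (n+1) * |y| ^ α) 0 y := by
      intro y hy
      simp only [Set.mem_compl_iff, Set.mem_singleton_iff] at hy
      rw [slope_def_field]
      field_simp [h0]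
      ring
    have hev : (fun y : ℝ => y ^ n * |y| ^ α) =ᶠ[nhdsWithin (0:ℝ) {(0:ℝ)}ᶜ]
        slope (fun y : ℝ => y ^ (n+1) * |y| ^ α) 0 :=
      Filter.eventuallyEq_of_mem self_mem_nhdsWithin this
    have hc : Continuous fun y : ℝ => y ^ n * |y| ^ α :=
      (continuous_pow n).mul (continuous_abs.rpow_const (fun y => Or.inr hα.le))
    have ht := (hc.tendsto 0).mono_left (nhdsWithin_le_nhds (s := {(0:ℝ)}ᶜ))
    refine Filter.Tendsto.congr' hev ?_
    simpa [Real.zero_rpow hα.ne'] using ht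
  · have h1 : HasDerivAt (fun y : ℝ => y ^ α) (α * x ^ (α - 1)) x :=
      Real.hasDerivAt_rpow_const (Or.inl hx.ne')
    have h2 : HasDerivAt (fun y : ℝ => y ^ (n+1) * y ^ α)
        ((↑(n+1) * x ^ n) * x ^ α + x ^ (n+1) * (α * x ^ (α - 1))) x :=
      (hasDerivAt_pow (n+1) x).mul h1
    have heq : (fun y : ℝ => y ^ (n+1) * |y| ^ α) =ᶠ[nhds x] fun y => y ^ (n+1) * y ^ α := by
      filter_upwards [Ioi_mem_nhds hx] with y hy
      rw [abs_of_pos hy]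
    rw [abs_of_pos hx]
    refine (h2.congr_of_eventuallyEq heq).congr_deriv ?_
    have : x ^ (α - 1) = x ^ α / x := by
      rw [Real.rpow_sub hx, Real.rpow_one]
    rw [this]
    field_simp
    push_cast; ring

lemma key_cont (α : ℝ) (hα : 0 < α) (n : ℕ) (c : ℝ) :
    Continuous fun σ : ℝ => (c + σ) ^ n * |c + σ| ^ α := by
  have h : Continuous fun σ : ℝ => c + σ := continuous_const.add continuous_id
  exact (h.pow n).mul ((h.abs).rpow_const (fun y => Or.inr hα.le))


lemma key_integral (α : ℝ) (hα : 0 < α) (n : ℕ) (a b c : ℝ) :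
    ∫ σ in a..b, (c + σ) ^ n * |c + σ| ^ α
      = ((c + b) ^ (n+1) * |c + b| ^ α - (c + a) ^ (n+1) * |c + a| ^ α) / (α + n + 1) := by
  have hpos : (0:ℝ) < α + n + 1 := by positivity
  have hderiv : ∀ σ ∈ Set.uIcc a b,
      HasDerivAt (fun σ : ℝ => (c + σ) ^ (n+1) * |c + σ| ^ α / (α + n + 1))
        ((c + σ) ^ n * |c + σ| ^ α) σ := by
    intro σ _
    have h1 : HasDerivAt (fun σ : ℝ => (c + σ) ^ (n+1) * |c + σ| ^ α)
        ((α + n + 1) * ((c + σ) ^ n * |c + σ| ^ α) * 1) σ :=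
      (key_deriv α hα n (c + σ)).comp σ ((hasDerivAt_id σ).const_add c)
    have h2 := h1.div_const (α + n + 1)
    refine h2.congr_deriv ?_
    field_simp
  have hint : IntervalIntegrable (fun σ : ℝ => (c + σ) ^ n * |c + σ| ^ α)
      MeasureTheory.volume a b := (key_cont α hα n c).intervalIntegrable a b
  rw [intervalIntegral.integral_eq_sub_of_hasDerivAt hderiv hint]
  ring

noncomputable def eps (b : Bool) : ℝ := if b then 1 else -1

lemma aux_main (α : ℝ) (hα : 0 < α) :
    ∀ (k : ℕ) (x : Fin k → ℝ) (n : ℕ) (c : ℝ),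
    iterIntSum (List.ofFn x) (fun t => (c + t) ^ n * |c + t| ^ α)
      = (1 / ∏ i ∈ Finset.range k, (α + n + 1 + i)) *
          ∑ s : Fin k → Bool, (∏ i, eps (s i)) *
            ((c + ∑ i, eps (s i) * x i) ^ (n + k) * |c + ∑ i, eps (s i) * x i| ^ α) := by
  intro k
  induction k with
  | zero =>
    intro x n c
    simp [iterIntSum, List.ofFn_zero]
  | succ k ih =>
    intro x n c
    have hP : (∏ i ∈ Finset.range k, (α + n + 1 + i)) ≠ 0 := by
      apply Finset.prod_ne_zero_iff.mpr
      intro i _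
      positivity
    have hfac : (α + (n : ℝ) + 1 + (k : ℝ)) ≠ 0 := by positivity
    have hfac2 : (α + ((n : ℝ) + (k : ℝ)) + 1) ≠ 0 := by positivity
    rw [List.ofFn_succ]
    show (∫ σ in (-(x 0))..(x 0), iterIntSum (List.ofFn fun i => x i.succ)
        (fun t => (c + (σ + t)) ^ n * |c + (σ + t)| ^ α)) = _
    have step : ∀ σ : ℝ, iterIntSum (List.ofFn fun i => x i.succ)
        (fun t => (c + (σ + t)) ^ n * |c + (σ + t)| ^ α)
        = (1 / ∏ i ∈ Finset.range k, (α + n + 1 + i)) *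
            ∑ s : Fin k → Bool, (∏ i, eps (s i)) *
              (((c + ∑ i, eps (s i) * x i.succ) + σ) ^ (n + k) *
                |(c + ∑ i, eps (s i) * x i.succ) + σ| ^ α) := by
      intro σ
      have e1 : (fun t => (c + (σ + t)) ^ n * |c + (σ + t)| ^ α)
          = fun t => ((c + σ) + t) ^ n * |(c + σ) + t| ^ α := by
        funext t; rw [add_assoc]
      rw [e1, ih (fun i => x i.succ) n (c + σ)]
      congr 1
      apply Finset.sum_congr rfl
      intro s _
      have e2 : (c + σ) + ∑ i, eps (s i) * x i.succ
          = (c + ∑ i, eps (s i) * x i.succ) + σ := by ring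
      rw [e2]
    simp only [step]
    rw [intervalIntegral.integral_const_mul]
    have hintg : ∀ s : Fin k → Bool, IntervalIntegrable (fun σ : ℝ =>
        (∏ i, eps (s i)) * (((c + ∑ i, eps (s i) * x i.succ) + σ) ^ (n + k) *
          |(c + ∑ i, eps (s i) * x i.succ) + σ| ^ α)) volume (-(x 0)) (x 0) := fun s =>
      (continuous_const.mul
        (key_cont α hα (n + k) (c + ∑ i, eps (s i) * x i.succ))).intervalIntegrable _ _
    rw [intervalIntegral.integral_finset_sum (fun s _ => hintg s)]
    simp only [intervalIntegral.integral_const_mul, key_integral α hα]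
    -- RHS manipulation
    rw [Finset.prod_range_succ]
    rw [← Equiv.sum_comp (Fin.consEquiv (fun _ => Bool))
      (fun s : Fin (k+1) → Bool => (∏ i, eps (s i)) *
        ((c + ∑ i, eps (s i) * x i) ^ (n + (k+1)) * |c + ∑ i, eps (s i) * x i| ^ α))]
    rw [Fintype.sum_prod_type]
    rw [Fintype.sum_bool]
    simp only [Fin.consEquiv_apply, Fin.prod_univ_succ, Fin.sum_univ_succ,
      Fin.cons_zero, Fin.cons_succ, eps, if_true, if_false, one_mul, neg_mul, neg_one_mul]
    rw [← Finset.sum_add_distrib, Finset.mul_sum, Finset.mul_sum]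
    apply Finset.sum_congr rfl
    intro s _
    set S := ∑ i, (if s i then (1:ℝ) else -1) * x i.succ with hS
    set P := ∏ i ∈ Finset.range k, (α + (n:ℝ) + 1 + i) with hPdef
    have e3 : c + S + x 0 = c + (x 0 + S) := by ring
    have e4 : c + S + -x 0 = c + (-x 0 + S) := by ring
    rw [e3, e4]
    have epow : n + k + 1 = n + (k + 1) := by ring
    rw [epow]
    push_cast
    field_simp
    ring


theorem iterated_integral_abs_rpow (k : ℕ) (hk : 1 ≤ k) (α : ℝ) (hα : 0 < α)
    (x₁ : ℝ) (x : Fin k → ℝ) :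
    iterIntSum (List.ofFn x) (fun t => |x₁ + t| ^ α)
      = (1 / ∏ i ∈ Finset.range k, (α + 1 + i)) *
          ∑ s : Fin k → Bool,
            (∏ i, (if s i then (1 : ℝ) else -1)) *
              ((x₁ + ∑ i, (if s i then (1 : ℝ) else -1) * x i) ^ k *
                |x₁ + ∑ i, (if s i then (1 : ℝ) else -1) * x i| ^ α) := by
  have h := aux_main α hα k x 0 x₁
  have e : (fun t => |x₁ + t| ^ α) = fun t => (x₁ + t) ^ 0 * |x₁ + t| ^ α := by
    funext t; rw [pow_zero, one_mul]
  rw [e, h]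
  simp [eps]
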